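/- Let N : ℝ² → ℝ³ be twice continuously differentiable, let A, S, B : ℝ² → ℝ be continuously differentiable and F : ℝ² → ℝ be such that (A·N_x)_x + (S·N_y)_x + (B·N_y)_y + (S·N_x)_y = F·N at every point of ℝ². Then there exists a map R : ℝ² → ℝ³ with R_x = −( S·(N×N_x) + B·(N×N_y) ) and R_y = A·(N×N_x) + S·(N×N_y) at every point; moreover any such R satisfies R_x × R_y = (A·B − S²)·det(N, N_x, N_y)·N and ⟨N, R_x⟩ = 0 = ⟨N, R_y⟩ everywhere, so that R is the position vector of a surface having N as a co-normal field, which is regular wherever (A·B − S²)·det(N, N_x, N_y) ≠ 0. -/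

import Mathlib

open Matrix

set_option synthInstance.maxHeartbeats 1000000
set_option maxHeartbeats 2000000

/-- Partial derivative with respect to the first coordinate. -/
noncomputable def pdx (f : ℝ × ℝ → (Fin 3 → ℝ)) (p : ℝ × ℝ) : Fin 3 → ℝ :=
  fderiv ℝ f p (1, 0)

/-- Partial derivative with respect to the second coordinate. -/
noncomputable def pdy (f : ℝ × ℝ → (Fin 3 → ℝ)) (p : ℝ × ℝ) : Fin 3 → ℝ :=
  fderiv ℝ f p (0, 1)

/-- Determinant of the 3×3 matrix with rows `u`, `v`, `w`. -/
noncomputable def det3 (u v w : Fin 3 → ℝ) : ℝ :=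
  (Matrix.of ![u, v, w]).det

/-- The cross product as a continuous bilinear map. -/
noncomputable def crossL : (Fin 3 → ℝ) →L[ℝ] (Fin 3 → ℝ) →L[ℝ] (Fin 3 → ℝ) :=
  LinearMap.toContinuousLinearMap
    (((LinearMap.toContinuousLinearMap :
        ((Fin 3 → ℝ) →ₗ[ℝ] (Fin 3 → ℝ)) ≃ₗ[ℝ] ((Fin 3 → ℝ) →L[ℝ] (Fin 3 → ℝ))) :
        ((Fin 3 → ℝ) →ₗ[ℝ] (Fin 3 → ℝ)) →ₗ[ℝ] ((Fin 3 → ℝ) →L[ℝ] (Fin 3 → ℝ))) ∘ₗ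
      (crossProduct : (Fin 3 → ℝ) →ₗ[ℝ] (Fin 3 → ℝ) →ₗ[ℝ] (Fin 3 → ℝ)))

@[simp] lemma crossL_apply (u v : Fin 3 → ℝ) : crossL u v = u ⨯₃ v := rfl

lemma pd_smul {f : ℝ × ℝ → ℝ} {g : ℝ × ℝ → (Fin 3 → ℝ)} {p : ℝ × ℝ}
    (hf : DifferentiableAt ℝ f p) (hg : DifferentiableAt ℝ g p) (w : ℝ × ℝ) :
    fderiv ℝ (fun q => f q • g q) p w = fderiv ℝ f p w • g p + f p • fderiv ℝ g p w := by
  rw [show (fun q => f q • g q) = f • g from rfl, (hf.hasFDerivAt.smul hg.hasFDerivAt).fderiv]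
  simp [add_comm]

lemma pd_cross {g h : ℝ × ℝ → (Fin 3 → ℝ)} {p : ℝ × ℝ}
    (hg : DifferentiableAt ℝ g p) (hh : DifferentiableAt ℝ h p) (w : ℝ × ℝ) :
    fderiv ℝ (fun q => crossL (g q) (h q)) p w
      = crossL (fderiv ℝ g p w) (h p) + crossL (g p) (fderiv ℝ h p w) := by
  have hc : HasFDerivAt (fun q => crossL (g q))
      (crossL.comp (fderiv ℝ g p)) p := crossL.hasFDerivAt.comp p hg.hasFDerivAt
  rw [(hc.clm_apply hh.hasFDerivAt).fderiv]
  simp [add_comm]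

open intervalIntegral MeasureTheory in
/-- Poincaré lemma on `ℝ²`: a `C¹` one-form with symmetric derivative is exact. -/
lemma poincare {E : Type*} [NormedAddCommGroup E] [NormedSpace ℝ E] [CompleteSpace E]
    (ω : ℝ × ℝ → (ℝ × ℝ) →L[ℝ] E) (hω : ContDiff ℝ 1 ω)
    (hsymm : ∀ p u v, fderiv ℝ ω p u v = fderiv ℝ ω p v u) :
    ∃ R : ℝ × ℝ → E, ∀ p, HasFDerivAt R (ω p) p := by
  classical
  set F : (ℝ × ℝ) → ℝ → E := fun x t => ω (t • x) x with hF
  set F' : (ℝ × ℝ) → ℝ → (ℝ × ℝ) →L[ℝ] E := fun x t =>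
    (ω (t • x)).comp (ContinuousLinearMap.id ℝ (ℝ × ℝ)) +
      ((fderiv ℝ ω (t • x)).comp (t • ContinuousLinearMap.id ℝ (ℝ × ℝ))).flip x with hF'
  have hωc : Continuous ω := hω.continuous
  have hωd : Differentiable ℝ ω := hω.differentiable one_ne_zero
  have hDc : Continuous (fderiv ℝ ω) := hω.continuous_fderiv one_ne_zero
  have h_diff : ∀ (t : ℝ) (x : ℝ × ℝ), HasFDerivAt (fun x => F x t) (F' x t) x := by
    intro t x
    have h1 : HasFDerivAt (fun x : ℝ × ℝ => t • x)
        (t • ContinuousLinearMap.id ℝ (ℝ × ℝ)) x :=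
      (t • ContinuousLinearMap.id ℝ (ℝ × ℝ)).hasFDerivAt
    have h2 : HasFDerivAt (fun x => ω (t • x))
        ((fderiv ℝ ω (t • x)).comp (t • ContinuousLinearMap.id ℝ (ℝ × ℝ))) x :=
      (hωd (t • x)).hasFDerivAt.comp x h1
    exact h2.clm_apply (hasFDerivAt_id x)
  have hF'cont : Continuous fun z : ℝ × (ℝ × ℝ) => F' z.2 z.1 := by
    apply Continuous.add
    · exact (hωc.comp (continuous_fst.smul continuous_snd)).clm_comp continuous_const
    · apply Continuous.clm_apply _ continuous_snd
      have : Continuous fun z : ℝ × (ℝ × ℝ) =>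
          (fderiv ℝ ω (z.1 • z.2)).comp (z.1 • ContinuousLinearMap.id ℝ (ℝ × ℝ)) :=
        (hDc.comp (continuous_fst.smul continuous_snd)).clm_comp
          (continuous_fst.smul continuous_const)
      exact ((ContinuousLinearMap.flipₗᵢ ℝ (ℝ × ℝ) (ℝ × ℝ) E).continuous.comp this :)
  refine ⟨fun x => ∫ t in (0:ℝ)..1, F x t, fun x₀ => ?_⟩
  obtain ⟨C, hC⟩ : ∃ C, ∀ z ∈ (Set.Icc (0:ℝ) 1 ×ˢ Metric.closedBall x₀ 1),
      ‖(fun z : ℝ × (ℝ × ℝ) => F' z.2 z.1) z‖ ≤ C :=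
    (isCompact_Icc.prod (isCompact_closedBall x₀ 1)).exists_bound_of_continuousOn
      hF'cont.continuousOn
  have key := intervalIntegral.hasFDerivAt_integral_of_dominated_of_fderiv_le
    (F := F) (F' := F') (x₀ := x₀) (a := 0) (b := 1) (μ := volume)
    (bound := fun _ => C) (Metric.ball_mem_nhds x₀ one_pos)
    (Filter.Eventually.of_forall fun x =>
      ((hωc.comp (continuous_id.smul continuous_const)).clm_apply
        continuous_const).aestronglyMeasurable.restrict)
    (((hωc.comp (continuous_id.smul continuous_const)).clm_apply
        continuous_const).intervalIntegrable 0 1)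
    ((hF'cont.comp (continuous_id.prodMk continuous_const)).aestronglyMeasurable.restrict)
    (Filter.Eventually.of_forall fun t ht x hx => by
      have ht' : t ∈ Set.Icc (0:ℝ) 1 := by
        rw [Set.uIoc_of_le one_pos.le] at ht; exact Set.Ioc_subset_Icc_self ht
      exact hC (t, x) (Set.mk_mem_prod ht' (Metric.ball_subset_closedBall hx)))
    (intervalIntegrable_const)
    (Filter.Eventually.of_forall fun t _ x _ => h_diff t x)
  have hg : ∀ t : ℝ, HasDerivAt (fun t => t • ω (t • x₀)) (F' x₀ t) t := by
    intro t
    have h1 : HasDerivAt (fun t : ℝ => t • x₀) x₀ t := by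
      simpa using (hasDerivAt_id t).smul_const x₀
    have h2 : HasDerivAt (fun t => ω (t • x₀)) (fderiv ℝ ω (t • x₀) x₀) t :=
      (hωd (t • x₀)).hasFDerivAt.comp_hasDerivAt t h1
    have h3 := (hasDerivAt_id t).smul h2
    have h4 : F' x₀ t = t • (fderiv ℝ ω (t • x₀) x₀) + (1:ℝ) • ω (t • x₀) := by
      refine ContinuousLinearMap.ext fun h => ?_
      simp only [hF', ContinuousLinearMap.add_apply, ContinuousLinearMap.coe_comp',
        Function.comp_apply, ContinuousLinearMap.flip_apply, ContinuousLinearMap.smul_apply,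
        ContinuousLinearMap.id_apply, ContinuousLinearMap.map_smul, one_smul, id_eq]
      rw [hsymm (t • x₀) h x₀]
      abel
    rw [h4]
    exact h3
  have hInt : IntervalIntegrable (F' x₀) volume 0 1 :=
    (hF'cont.comp (continuous_id.prodMk continuous_const)).intervalIntegrable 0 1
  have hval : (∫ t in (0:ℝ)..1, F' x₀ t) = ω x₀ := by
    rw [intervalIntegral.integral_eq_sub_of_hasDerivAt (fun t _ => hg t) hInt]
    simp
  rw [hval] at key
  exact key

theorem converse_lelieuvre_surface
    (N : ℝ × ℝ → (Fin 3 → ℝ)) (A S B F : ℝ × ℝ → ℝ)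
    (hN : ContDiff ℝ 2 N)
    (hA : ContDiff ℝ 1 A) (hS : ContDiff ℝ 1 S) (hB : ContDiff ℝ 1 B)
    (heq : ∀ p,
      pdx (fun q => A q • pdx N q) p + pdx (fun q => S q • pdy N q) p
        + pdy (fun q => B q • pdy N q) p + pdy (fun q => S q • pdx N q) p
      = F p • N p) :
    (∃ R : ℝ × ℝ → (Fin 3 → ℝ), ∀ p,
        pdx R p = -(S p • (N p ⨯₃ pdx N p) + B p • (N p ⨯₃ pdy N p)) ∧
        pdy R p = A p • (N p ⨯₃ pdx N p) + S p • (N p ⨯₃ pdy N p)) ∧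
    (∀ R : ℝ × ℝ → (Fin 3 → ℝ),
      (∀ p, pdx R p = -(S p • (N p ⨯₃ pdx N p) + B p • (N p ⨯₃ pdy N p)) ∧
            pdy R p = A p • (N p ⨯₃ pdx N p) + S p • (N p ⨯₃ pdy N p)) →
      ∀ p,
        pdx R p ⨯₃ pdy R p
          = ((A p * B p - S p ^ 2) * det3 (N p) (pdx N p) (pdy N p)) • N p ∧
        N p ⬝ᵥ pdx R p = 0 ∧ N p ⬝ᵥ pdy R p = 0 ∧
        ((A p * B p - S p ^ 2) * det3 (N p) (pdx N p) (pdy N p) ≠ 0 →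
          pdx R p ⨯₃ pdy R p ≠ 0)) := by
  classical
  constructor
  · -- existence
    have hN1 : ContDiff ℝ 1 N := hN.of_le one_le_two
    have hfd : ContDiff ℝ 1 (fderiv ℝ N) := hN.fderiv_right (by norm_num)
    have hnx : ContDiff ℝ 1 (pdx N) := hfd.clm_apply contDiff_const
    have hny : ContDiff ℝ 1 (pdy N) := hfd.clm_apply contDiff_const
    have hw1 : ContDiff ℝ 1 (fun q => crossL (N q) (pdx N q)) :=
      (crossL.contDiff.comp hN1).clm_apply hnx
    have hw2 : ContDiff ℝ 1 (fun q => crossL (N q) (pdy N q)) :=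
      (crossL.contDiff.comp hN1).clm_apply hny
    have hP : ContDiff ℝ 1
        (fun q => -(S q • crossL (N q) (pdx N q) + B q • crossL (N q) (pdy N q))) :=
      ((hS.smul hw1).add (hB.smul hw2)).neg
    have hQ : ContDiff ℝ 1
        (fun q => A q • crossL (N q) (pdx N q) + S q • crossL (N q) (pdy N q)) :=
      (hA.smul hw1).add (hS.smul hw2)
    set P : ℝ × ℝ → (Fin 3 → ℝ) :=
      fun q => -(S q • crossL (N q) (pdx N q) + B q • crossL (N q) (pdy N q)) with hPdef
    set Q : ℝ × ℝ → (Fin 3 → ℝ) :=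
      fun q => A q • crossL (N q) (pdx N q) + S q • crossL (N q) (pdy N q) with hQdef
    have hdN : ∀ p, DifferentiableAt ℝ N p := fun p => hN1.differentiable one_ne_zero p
    have hdnx : ∀ p, DifferentiableAt ℝ (pdx N) p := fun p => hnx.differentiable one_ne_zero p
    have hdny : ∀ p, DifferentiableAt ℝ (pdy N) p := fun p => hny.differentiable one_ne_zero p
    have hdA : ∀ p, DifferentiableAt ℝ A p := fun p => hA.differentiable one_ne_zero p
    have hdS : ∀ p, DifferentiableAt ℝ S p := fun p => hS.differentiable one_ne_zero p
    have hdB : ∀ p, DifferentiableAt ℝ B p := fun p => hB.differentiable one_ne_zero p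
    have hdw1 : ∀ p, DifferentiableAt ℝ (fun q => crossL (N q) (pdx N q)) p :=
      fun p => hw1.differentiable one_ne_zero p
    have hdw2 : ∀ p, DifferentiableAt ℝ (fun q => crossL (N q) (pdy N q)) p :=
      fun p => hw2.differentiable one_ne_zero p
    -- closedness
    have hclosed : ∀ p, fderiv ℝ Q p (1, 0) = fderiv ℝ P p (0, 1) := by
      intro p
      have c1 : fderiv ℝ (fun q => crossL (N q) (pdx N q)) p (1, 0)
          = crossL (pdx N p) (pdx N p) + crossL (N p) (fderiv ℝ (pdx N) p (1, 0)) :=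
        pd_cross (hdN p) (hdnx p) (1, 0)
      have c2 : fderiv ℝ (fun q => crossL (N q) (pdy N q)) p (1, 0)
          = crossL (pdx N p) (pdy N p) + crossL (N p) (fderiv ℝ (pdy N) p (1, 0)) :=
        pd_cross (hdN p) (hdny p) (1, 0)
      have c3 : fderiv ℝ (fun q => crossL (N q) (pdx N q)) p (0, 1)
          = crossL (pdy N p) (pdx N p) + crossL (N p) (fderiv ℝ (pdx N) p (0, 1)) :=
        pd_cross (hdN p) (hdnx p) (0, 1)
      have c4 : fderiv ℝ (fun q => crossL (N q) (pdy N q)) p (0, 1)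
          = crossL (pdy N p) (pdy N p) + crossL (N p) (fderiv ℝ (pdy N) p (0, 1)) :=
        pd_cross (hdN p) (hdny p) (0, 1)
      have hQx : fderiv ℝ Q p (1, 0)
          = (fderiv ℝ A p (1, 0) • crossL (N p) (pdx N p)
              + A p • (crossL (pdx N p) (pdx N p)
                  + crossL (N p) (fderiv ℝ (pdx N) p (1, 0))))
            + (fderiv ℝ S p (1, 0) • crossL (N p) (pdy N p)
              + S p • (crossL (pdx N p) (pdy N p)
                  + crossL (N p) (fderiv ℝ (pdy N) p (1, 0)))) := by
        rw [hQdef, fderiv_fun_add ((hdA p).fun_smul (hdw1 p)) ((hdS p).fun_smul (hdw2 p)),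
          ContinuousLinearMap.add_apply, pd_smul (hdA p) (hdw1 p), pd_smul (hdS p) (hdw2 p),
          c1, c2]
      have hPy : fderiv ℝ P p (0, 1)
          = -((fderiv ℝ S p (0, 1) • crossL (N p) (pdx N p)
              + S p • (crossL (pdy N p) (pdx N p)
                  + crossL (N p) (fderiv ℝ (pdx N) p (0, 1))))
            + (fderiv ℝ B p (0, 1) • crossL (N p) (pdy N p)
              + B p • (crossL (pdy N p) (pdy N p)
                  + crossL (N p) (fderiv ℝ (pdy N) p (0, 1))))) := by
        rw [hPdef, fderiv_fun_neg, ContinuousLinearMap.neg_apply,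
          fderiv_fun_add ((hdS p).fun_smul (hdw1 p)) ((hdB p).fun_smul (hdw2 p)),
          ContinuousLinearMap.add_apply, pd_smul (hdS p) (hdw1 p), pd_smul (hdB p) (hdw2 p),
          c3, c4]
      -- expand the PDE
      have e1 : pdx (fun q => A q • pdx N q) p
          = fderiv ℝ A p (1, 0) • pdx N p + A p • fderiv ℝ (pdx N) p (1, 0) :=
        pd_smul (hdA p) (hdnx p) (1, 0)
      have e2 : pdx (fun q => S q • pdy N q) p
          = fderiv ℝ S p (1, 0) • pdy N p + S p • fderiv ℝ (pdy N) p (1, 0) :=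
        pd_smul (hdS p) (hdny p) (1, 0)
      have e3 : pdy (fun q => B q • pdy N q) p
          = fderiv ℝ B p (0, 1) • pdy N p + B p • fderiv ℝ (pdy N) p (0, 1) :=
        pd_smul (hdB p) (hdny p) (0, 1)
      have e4 : pdy (fun q => S q • pdx N q) p
          = fderiv ℝ S p (0, 1) • pdx N p + S p • fderiv ℝ (pdx N) p (0, 1) :=
        pd_smul (hdS p) (hdnx p) (0, 1)
      have h4 := heq p
      rw [e1, e2, e3, e4] at h4
      have h5 := congrArg (fun z => crossL (N p) z) h4
      simp only [map_add, _root_.map_smul] at h5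
      have hnn : crossL (N p) (N p) = 0 := by
        rw [crossL_apply, cross_self]
      rw [hnn, smul_zero] at h5
      have z1 : crossL (pdx N p) (pdx N p) = 0 := by rw [crossL_apply, cross_self]
      have z2 : crossL (pdy N p) (pdy N p) = 0 := by rw [crossL_apply, cross_self]
      have z3 : crossL (pdy N p) (pdx N p) = -crossL (pdx N p) (pdy N p) := by
        rw [crossL_apply, crossL_apply]; exact (cross_anticomm _ _).symm
      rw [hQx, hPy, z1, z2, z3]
      linear_combination (norm := module) h5
    -- the one-form and its symmetry
    set Φ₁ : (Fin 3 → ℝ) →L[ℝ] (ℝ × ℝ) →L[ℝ] (Fin 3 → ℝ) :=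
      ContinuousLinearMap.smulRightL ℝ (ℝ × ℝ) (Fin 3 → ℝ) (ContinuousLinearMap.fst ℝ ℝ ℝ)
      with hΦ₁def
    set Φ₂ : (Fin 3 → ℝ) →L[ℝ] (ℝ × ℝ) →L[ℝ] (Fin 3 → ℝ) :=
      ContinuousLinearMap.smulRightL ℝ (ℝ × ℝ) (Fin 3 → ℝ) (ContinuousLinearMap.snd ℝ ℝ ℝ)
      with hΦ₂def
    set ω : ℝ × ℝ → (ℝ × ℝ) →L[ℝ] (Fin 3 → ℝ) := fun p => Φ₁ (P p) + Φ₂ (Q p) with hωdef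
    have hΦ₁app : ∀ (c : Fin 3 → ℝ) (u : ℝ × ℝ), Φ₁ c u = u.1 • c := fun c u => rfl
    have hΦ₂app : ∀ (c : Fin 3 → ℝ) (u : ℝ × ℝ), Φ₂ c u = u.2 • c := fun c u => rfl
    have hωC : ContDiff ℝ 1 ω := (Φ₁.contDiff.comp hP).add (Φ₂.contDiff.comp hQ)
    have hdP : ∀ p, DifferentiableAt ℝ P p := fun p => hP.differentiable one_ne_zero p
    have hdQ : ∀ p, DifferentiableAt ℝ Q p := fun p => hQ.differentiable one_ne_zero p
    have hfo : ∀ p u, fderiv ℝ ω p u = Φ₁ (fderiv ℝ P p u) + Φ₂ (fderiv ℝ Q p u) := by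
      intro p u
      have hω' : HasFDerivAt ω (Φ₁.comp (fderiv ℝ P p) + Φ₂.comp (fderiv ℝ Q p)) p :=
        (Φ₁.hasFDerivAt.comp p (hdP p).hasFDerivAt).add
          (Φ₂.hasFDerivAt.comp p (hdQ p).hasFDerivAt)
      rw [hω'.fderiv]
      rfl
    have hsymm : ∀ p u v, fderiv ℝ ω p u v = fderiv ℝ ω p v u := by
      intro p u v
      have hexp : ∀ (L : (ℝ × ℝ) →L[ℝ] (Fin 3 → ℝ)) (u : ℝ × ℝ),
          L u = u.1 • L (1, 0) + u.2 • L (0, 1) := by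
        intro L u
        conv_lhs => rw [show u = u.1 • ((1:ℝ), (0:ℝ)) + u.2 • ((0:ℝ), (1:ℝ)) by
          ext <;> simp]
        rw [map_add, _root_.map_smul, _root_.map_smul]
      rw [hfo, hfo, ContinuousLinearMap.add_apply, ContinuousLinearMap.add_apply,
        hΦ₁app, hΦ₂app, hΦ₁app, hΦ₂app,
        hexp (fderiv ℝ P p) u, hexp (fderiv ℝ Q p) u,
        hexp (fderiv ℝ P p) v, hexp (fderiv ℝ Q p) v, ← hclosed p]
      module
    obtain ⟨R, hR⟩ := poincare ω hωC hsymm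
    refine ⟨R, fun p => ⟨?_, ?_⟩⟩
    · show fderiv ℝ R p (1, 0) = _
      rw [(hR p).fderiv, hωdef]
      simp only [ContinuousLinearMap.add_apply, hΦ₁app, hΦ₂app]
      simp [hPdef, hQdef]
    · show fderiv ℝ R p (0, 1) = _
      rw [(hR p).fderiv, hωdef]
      simp only [ContinuousLinearMap.add_apply, hΦ₁app, hΦ₂app]
      simp [hPdef, hQdef]
  · -- algebraic identities
    intro R hR p
    obtain ⟨h1, h2⟩ := hR p
    have key : pdx R p ⨯₃ pdy R p
        = ((A p * B p - S p ^ 2) * det3 (N p) (pdx N p) (pdy N p)) • N p := by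
      rw [h1, h2]
      funext i
      fin_cases i <;>
      · simp [cross_apply, det3, Matrix.det_fin_three]
        ring
    refine ⟨key, ?_, ?_, ?_⟩
    · rw [h1]
      simp [cross_apply, dotProduct, Fin.sum_univ_three]
      ring
    · rw [h2]
      simp [cross_apply, dotProduct, Fin.sum_univ_three]
      ring
    · intro hco
      rw [key]
      have hn : N p ≠ 0 := by
        intro h0
        apply hco
        rw [h0]
        simp [det3, Matrix.det_fin_three]
      exact smul_ne_zero hco hn
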